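/- Let a, b ∈ ℝ with a ≠ 0 and b ≠ 0, h(φ) = |cos φ|³/|a|³ + sin²φ/b², and u(θ) = √(h(θ/2)). Then for every θ ∈ ℝ, writing φ = θ/2, one has the identity u''(θ) + u(θ) = [ 3·sin⁴φ/b⁴ + (1/(|a|³·b²))·( 3·|cos φ|·sin⁴φ + (17/2)·|cos φ|³·sin²φ + |cos φ|⁵ ) + (1/a⁶)·( (3/4)·cos⁴φ·sin²φ + (5/2)·cos⁶φ ) ] / ( 4·h(φ)^{3/2} ). -/

import Mathlib

open Real Filter Topology

private lemma abs_cube_eq (y : ℝ) : |y| ^ 3 = y ^ 2 * |y| := by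
  rcases abs_cases y with ⟨h, _⟩ | ⟨h, _⟩ <;> rw [h] <;> ring

private lemma hasDerivAt_mul_abs (x : ℝ) :
    HasDerivAt (fun y : ℝ => y * |y|) (2 * |x|) x := by
  rcases lt_trichotomy x 0 with hx | rfl | hx
  · have h1 : HasDerivAt (fun y : ℝ => -(y * y)) (2 * |x|) x := by
      have h2 := ((hasDerivAt_id x).mul (hasDerivAt_id x)).neg
      refine h2.congr_deriv ?_
      simp only [id_eq]
      rw [abs_of_neg hx]; ring
    refine h1.congr_of_eventuallyEq ?_
    filter_upwards [eventually_lt_nhds hx] with y hy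
    rw [abs_of_neg hy]; ring
  · rw [hasDerivAt_iff_tendsto_slope]
    have h1 : Tendsto (fun y : ℝ => |y|) (𝓝[≠] (0 : ℝ)) (𝓝 |0|) :=
      (continuous_abs.tendsto 0).mono_left nhdsWithin_le_nhds
    simp only [abs_zero] at h1
    have h2 : (fun y : ℝ => |y|) =ᶠ[𝓝[≠] (0 : ℝ)] slope (fun y : ℝ => y * |y|) 0 := by
      filter_upwards [self_mem_nhdsWithin] with y hy
      have hy0 : y ≠ 0 := hy
      rw [slope_def_field]
      field_simp
      ring
    have := h1.congr' h2
    simpa using this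
  · have h1 : HasDerivAt (fun y : ℝ => y * y) (2 * |x|) x := by
      have h2 := (hasDerivAt_id x).mul (hasDerivAt_id x)
      refine h2.congr_deriv ?_
      simp only [id_eq]
      rw [abs_of_pos hx]; ring
    refine h1.congr_of_eventuallyEq ?_
    filter_upwards [eventually_gt_nhds hx] with y hy
    rw [abs_of_pos hy]

private lemma hasDerivAt_abs_cube (x : ℝ) :
    HasDerivAt (fun y : ℝ => |y| ^ 3) (3 * x * |x|) x := by
  have h1 := (hasDerivAt_id x).mul (hasDerivAt_mul_abs x)
  have h2 : HasDerivAt (fun y : ℝ => y * (y * |y|)) (3 * x * |x|) x := by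
    refine h1.congr_deriv ?_; simp only [id_eq]; ring
  refine h2.congr_of_eventuallyEq (Eventually.of_forall fun y => ?_)
  show |y| ^ 3 = y * (y * |y|)
  rw [abs_cube_eq]; ring

private lemma L1 (A B : ℝ) (φ : ℝ) :
    HasDerivAt (fun x => |Real.cos x| ^ 3 / A + Real.sin x ^ 2 / B)
      (-3 * Real.sin φ * (Real.cos φ * |Real.cos φ|) / A
        + 2 * Real.sin φ * Real.cos φ / B) φ := by
  have h1 := ((hasDerivAt_abs_cube (Real.cos φ)).comp φ (Real.hasDerivAt_cos φ)).div_const A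
  have h2 := ((Real.hasDerivAt_sin φ).pow 2).div_const B
  have h3 := h1.add h2
  refine h3.congr_deriv ?_
  · push_cast; ring

private lemma L2 (A B : ℝ) (φ : ℝ) :
    HasDerivAt (fun x => -3 * Real.sin x * (Real.cos x * |Real.cos x|) / A
        + 2 * Real.sin x * Real.cos x / B)
      ((6 * Real.sin φ ^ 2 * |Real.cos φ| - 3 * |Real.cos φ| ^ 3) / A
        + (2 * Real.cos φ ^ 2 - 2 * Real.sin φ ^ 2) / B) φ := by
  have hca : HasDerivAt (fun x => Real.cos x * |Real.cos x|)
      (2 * |Real.cos φ| * -Real.sin φ) φ :=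
    (hasDerivAt_mul_abs (Real.cos φ)).comp φ (Real.hasDerivAt_cos φ)
  have h1 := (((Real.hasDerivAt_sin φ).const_mul (-3 : ℝ)).mul hca).div_const A
  have h2 := (((Real.hasDerivAt_sin φ).const_mul (2 : ℝ)).mul (Real.hasDerivAt_cos φ)).div_const B
  have h3 := h1.add h2
  refine h3.congr_deriv ?_
  · rw [abs_cube_eq]; ring

set_option maxHeartbeats 2000000 in

/-- With `h(φ) = |cos φ|³/|a|³ + sin²φ/b²` and `u(θ) = √(h(θ/2))`,
for every `θ` (writing `φ = θ/2`):
`u''(θ) + u(θ) = [3 sin⁴φ/b⁴ + (1/(|a|³ b²))(3 |cos φ| sin⁴φ + (17/2)|cos φ|³ sin²φ + |cos φ|⁵)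
  + (1/a⁶)((3/4) cos⁴φ sin²φ + (5/2) cos⁶φ)] / (4 h(φ)^{3/2})`. -/
theorem gielis_u_second_derivative_identity (a b : ℝ) (ha : a ≠ 0) (hb : b ≠ 0)
    (h u : ℝ → ℝ)
    (hh : ∀ φ, h φ = |Real.cos φ| ^ 3 / |a| ^ 3 + Real.sin φ ^ 2 / b ^ 2)
    (hu : ∀ θ, u θ = Real.sqrt (h (θ / 2))) :
    ∀ θ : ℝ,
      deriv (deriv u) θ + u θ =
        (3 * Real.sin (θ / 2) ^ 4 / b ^ 4
          + (1 / (|a| ^ 3 * b ^ 2)) *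
              (3 * |Real.cos (θ / 2)| * Real.sin (θ / 2) ^ 4
                + (17 / 2) * |Real.cos (θ / 2)| ^ 3 * Real.sin (θ / 2) ^ 2
                + |Real.cos (θ / 2)| ^ 5)
          + (1 / a ^ 6) *
              ((3 / 4) * Real.cos (θ / 2) ^ 4 * Real.sin (θ / 2) ^ 2
                + (5 / 2) * Real.cos (θ / 2) ^ 6))
        / (4 * h (θ / 2) ^ ((3 : ℝ) / 2)) := by
  intro θ
  have hA0 : (0 : ℝ) < |a| ^ 3 := by positivity
  have hB0 : (0 : ℝ) < b ^ 2 := by positivity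
  have hpos : ∀ φ : ℝ, 0 < h φ := by
    intro φ
    rw [hh φ]
    rcases eq_or_ne (Real.cos φ) 0 with h0 | h0
    · have hs : Real.sin φ ^ 2 = 1 := by
        have h2 := Real.sin_sq_add_cos_sq φ
        rw [h0] at h2; nlinarith [h2]
      have h1 : 0 < Real.sin φ ^ 2 / b ^ 2 := by rw [hs]; positivity
      have h2 : 0 ≤ |Real.cos φ| ^ 3 / |a| ^ 3 := by positivity
      linarith
    · have h1 : 0 < |Real.cos φ| := abs_pos.mpr h0
      have h2 : 0 < |Real.cos φ| ^ 3 / |a| ^ 3 := div_pos (by positivity) hA0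
      have h3 : 0 ≤ Real.sin φ ^ 2 / b ^ 2 := by positivity
      linarith
  have hsqne : ∀ t : ℝ, Real.sqrt (h t) ≠ 0 := fun t => (Real.sqrt_pos.mpr (hpos t)).ne'
  have hD1 : ∀ φ : ℝ, HasDerivAt h
      (-3 * Real.sin φ * (Real.cos φ * |Real.cos φ|) / |a| ^ 3
        + 2 * Real.sin φ * Real.cos φ / b ^ 2) φ := fun φ =>
    (L1 (|a| ^ 3) (b ^ 2) φ).congr_of_eventuallyEq (Filter.Eventually.of_forall hh)
  have hhalf : ∀ t : ℝ, HasDerivAt (fun x : ℝ => x / 2) (1 / 2 : ℝ) t := by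
    intro t
    simpa using (hasDerivAt_id t).div_const 2
  -- first derivative of u
  have hDu : ∀ t : ℝ, HasDerivAt u
      ((-3 * Real.sin (t / 2) * (Real.cos (t / 2) * |Real.cos (t / 2)|) / |a| ^ 3
          + 2 * Real.sin (t / 2) * Real.cos (t / 2) / b ^ 2)
        / (4 * Real.sqrt (h (t / 2)))) t := by
    intro t
    have hin : HasDerivAt (fun x : ℝ => h (x / 2))
        ((-3 * Real.sin (t / 2) * (Real.cos (t / 2) * |Real.cos (t / 2)|) / |a| ^ 3
          + 2 * Real.sin (t / 2) * Real.cos (t / 2) / b ^ 2) * (1 / 2)) t :=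
      (hD1 (t / 2)).comp t (hhalf t)
    have hs : HasDerivAt (fun x : ℝ => Real.sqrt (h (x / 2)))
        (1 / (2 * Real.sqrt (h (t / 2))) *
          ((-3 * Real.sin (t / 2) * (Real.cos (t / 2) * |Real.cos (t / 2)|) / |a| ^ 3
            + 2 * Real.sin (t / 2) * Real.cos (t / 2) / b ^ 2) * (1 / 2))) t :=
      (Real.hasDerivAt_sqrt (hpos (t / 2)).ne').comp t hin
    have h2 := hs.congr_of_eventuallyEq (Filter.Eventually.of_forall hu)
    refine h2.congr_deriv ?_
    field_simp
    ring
  have hderiv_u : deriv u = fun t : ℝ =>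
      (-3 * Real.sin (t / 2) * (Real.cos (t / 2) * |Real.cos (t / 2)|) / |a| ^ 3
          + 2 * Real.sin (t / 2) * Real.cos (t / 2) / b ^ 2)
        / (4 * Real.sqrt (h (t / 2))) := funext fun t => (hDu t).deriv
  -- derivative of the quotient
  have hQ : ∀ φ : ℝ, HasDerivAt (fun ψ : ℝ =>
      (-3 * Real.sin ψ * (Real.cos ψ * |Real.cos ψ|) / |a| ^ 3
          + 2 * Real.sin ψ * Real.cos ψ / b ^ 2)
        / (4 * Real.sqrt (h ψ)))
      ((((6 * Real.sin φ ^ 2 * |Real.cos φ| - 3 * |Real.cos φ| ^ 3) / |a| ^ 3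
            + (2 * Real.cos φ ^ 2 - 2 * Real.sin φ ^ 2) / b ^ 2)
          * (4 * Real.sqrt (h φ))
        - (-3 * Real.sin φ * (Real.cos φ * |Real.cos φ|) / |a| ^ 3
            + 2 * Real.sin φ * Real.cos φ / b ^ 2)
          * (4 * (1 / (2 * Real.sqrt (h φ)) *
              (-3 * Real.sin φ * (Real.cos φ * |Real.cos φ|) / |a| ^ 3
                + 2 * Real.sin φ * Real.cos φ / b ^ 2))))
        / (4 * Real.sqrt (h φ)) ^ 2) φ := by
    intro φ
    have hnum := L2 (|a| ^ 3) (b ^ 2) φ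
    have hden : HasDerivAt (fun ψ : ℝ => 4 * Real.sqrt (h ψ))
        (4 * (1 / (2 * Real.sqrt (h φ)) *
          (-3 * Real.sin φ * (Real.cos φ * |Real.cos φ|) / |a| ^ 3
            + 2 * Real.sin φ * Real.cos φ / b ^ 2))) φ :=
      (((Real.hasDerivAt_sqrt (hpos φ).ne').comp φ (hD1 φ))).const_mul 4
    exact hnum.div hden (mul_ne_zero (by norm_num) (hsqne φ))
  have hD2 : HasDerivAt (deriv u)
      (((((6 * Real.sin (θ / 2) ^ 2 * |Real.cos (θ / 2)| - 3 * |Real.cos (θ / 2)| ^ 3) / |a| ^ 3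
            + (2 * Real.cos (θ / 2) ^ 2 - 2 * Real.sin (θ / 2) ^ 2) / b ^ 2)
          * (4 * Real.sqrt (h (θ / 2)))
        - (-3 * Real.sin (θ / 2) * (Real.cos (θ / 2) * |Real.cos (θ / 2)|) / |a| ^ 3
            + 2 * Real.sin (θ / 2) * Real.cos (θ / 2) / b ^ 2)
          * (4 * (1 / (2 * Real.sqrt (h (θ / 2))) *
              (-3 * Real.sin (θ / 2) * (Real.cos (θ / 2) * |Real.cos (θ / 2)|) / |a| ^ 3
                + 2 * Real.sin (θ / 2) * Real.cos (θ / 2) / b ^ 2))))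
        / (4 * Real.sqrt (h (θ / 2))) ^ 2) * (1 / 2)) θ := by
    rw [hderiv_u]
    exact (hQ (θ / 2)).comp θ (hhalf θ)
  rw [hD2.deriv, hu θ]
  have hrpow : h (θ / 2) ^ ((3 : ℝ) / 2) = h (θ / 2) * Real.sqrt (h (θ / 2)) := by
    rw [show ((3 : ℝ) / 2) = 1 + 1 / 2 by norm_num, Real.rpow_add (hpos _), Real.rpow_one,
      ← Real.sqrt_eq_rpow]
  rw [hrpow]
  set S := Real.sqrt (h (θ / 2)) with hSdef
  have hS0 : 0 < S := Real.sqrt_pos.mpr (hpos _)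
  have hS2 : S ^ 2 = h (θ / 2) := Real.sq_sqrt (hpos _).le
  rw [← hS2]
  -- abbreviations
  have ha6 : a ^ 6 = (|a| ^ 3) ^ 2 := by
    rw [← abs_pow, sq_abs]; ring
  have key : 2 * ((6 * Real.sin (θ / 2) ^ 2 * |Real.cos (θ / 2)| - 3 * |Real.cos (θ / 2)| ^ 3) / |a| ^ 3
            + (2 * Real.cos (θ / 2) ^ 2 - 2 * Real.sin (θ / 2) ^ 2) / b ^ 2) * S ^ 2
        - (-3 * Real.sin (θ / 2) * (Real.cos (θ / 2) * |Real.cos (θ / 2)|) / |a| ^ 3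
            + 2 * Real.sin (θ / 2) * Real.cos (θ / 2) / b ^ 2) ^ 2
        + 16 * (S ^ 2) ^ 2
      = 4 * (3 * Real.sin (θ / 2) ^ 4 / b ^ 4
          + (1 / (|a| ^ 3 * b ^ 2)) *
              (3 * |Real.cos (θ / 2)| * Real.sin (θ / 2) ^ 4
                + (17 / 2) * |Real.cos (θ / 2)| ^ 3 * Real.sin (θ / 2) ^ 2
                + |Real.cos (θ / 2)| ^ 5)
          + (1 / a ^ 6) *
              ((3 / 4) * Real.cos (θ / 2) ^ 4 * Real.sin (θ / 2) ^ 2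
                + (5 / 2) * Real.cos (θ / 2) ^ 6)) := by
    rw [hS2, hh (θ / 2), ha6]
    rcases abs_cases (Real.cos (θ / 2)) with ⟨hc, _⟩ | ⟨hc, _⟩ <;> rw [hc] <;>
      field_simp <;> ring
  have expand : ((((6 * Real.sin (θ / 2) ^ 2 * |Real.cos (θ / 2)| - 3 * |Real.cos (θ / 2)| ^ 3) / |a| ^ 3
            + (2 * Real.cos (θ / 2) ^ 2 - 2 * Real.sin (θ / 2) ^ 2) / b ^ 2)
          * (4 * S)
        - (-3 * Real.sin (θ / 2) * (Real.cos (θ / 2) * |Real.cos (θ / 2)|) / |a| ^ 3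
            + 2 * Real.sin (θ / 2) * Real.cos (θ / 2) / b ^ 2)
          * (4 * (1 / (2 * S) *
              (-3 * Real.sin (θ / 2) * (Real.cos (θ / 2) * |Real.cos (θ / 2)|) / |a| ^ 3
                + 2 * Real.sin (θ / 2) * Real.cos (θ / 2) / b ^ 2))))
        / (4 * S) ^ 2) * (1 / 2) + S
      = (2 * ((6 * Real.sin (θ / 2) ^ 2 * |Real.cos (θ / 2)| - 3 * |Real.cos (θ / 2)| ^ 3) / |a| ^ 3
            + (2 * Real.cos (θ / 2) ^ 2 - 2 * Real.sin (θ / 2) ^ 2) / b ^ 2) * S ^ 2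
        - (-3 * Real.sin (θ / 2) * (Real.cos (θ / 2) * |Real.cos (θ / 2)|) / |a| ^ 3
            + 2 * Real.sin (θ / 2) * Real.cos (θ / 2) / b ^ 2) ^ 2
        + 16 * (S ^ 2) ^ 2) / (16 * (S ^ 2 * S)) := by
    field_simp
    ring
  rw [expand, key]
  ring
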